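/- A Kripke frame F = (W, R, R_D) validates the formula D_□ := ([≠]p ∧ p) → □p if and only if R ⊆ R_D ∪ Id_W. -/
import Mathlib


inductive Formula : Type where
  | var : Nat → Formula
  | bot : Formula
  | imp : Formula → Formula → Formula
  | box : Formula → Formula
  | dbox : Formula → Formula

def Formula.neg (φ : Formula) : Formula := .imp φ .bot
def Formula.and (φ ψ : Formula) : Formula := .neg (.imp φ (.neg ψ))
def Formula.or (φ ψ : Formula) : Formula := .imp (.neg φ) ψ
def Formula.ddiam (φ : Formula) : Formula := .neg (.dbox (.neg φ))

/-- AT0 := (p ∧ [≠]¬p ∧ ⟨≠⟩(q ∧ [≠]¬q)) → (□¬q ∨ ⟨≠⟩(q ∧ □¬p)), with p = var 0, q = var 1. -/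
def AT0 : Formula :=
  .imp (.and (.and (.var 0) (.dbox (.neg (.var 0))))
             (.ddiam (.and (.var 1) (.dbox (.neg (.var 1))))))
       (.or (.box (.neg (.var 1))) (.ddiam (.and (.var 1) (.box (.neg (.var 0))))))

/-- Kripke semantics for the bimodal language: `□` via `R`, `[≠]` via `RD`. -/
def ksat {W : Type*} (R RD : W → W → Prop) (V : Nat → Set W) : W → Formula → Prop
  | x, .var p => x ∈ V p
  | _, .bot => False
  | x, .imp φ ψ => ksat R RD V x φ → ksat R RD V x ψ
  | x, .box φ => ∀ y, R x y → ksat R RD V y φ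
  | x, .dbox φ => ∀ y, RD x y → ksat R RD V y φ

/-- D_□ := ([≠]p ∧ p) → □p. -/
def Dsq : Formula := .imp (.and (.dbox (.var 0)) (.var 0)) (.box (.var 0))

/-- A frame validates D_□ iff `R ⊆ RD ∪ Id`. -/
theorem stmt5 {W : Type*} (R RD : W → W → Prop) :
    (∀ (V : Nat → Set W) (x : W), ksat R RD V x Dsq) ↔
      ∀ x y : W, R x y → RD x y ∨ x = y := by
  constructor
  · intro h x y hxy
    have := h (fun _ => {z | RD x z ∨ z = x}) x
    simp only [Dsq, Formula.and, Formula.neg, ksat, Set.mem_setOf_eq] at this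
    have hy := this (fun f => f (fun z hz => Or.inl hz) (Or.inr trivial)) y hxy
    rcases hy with h1 | h2
    · exact Or.inl h1
    · exact Or.inr h2.symm
  · intro h V x
    simp only [Dsq, Formula.and, Formula.neg, ksat]
    intro hp y hxy
    by_contra hny
    apply hp
    intro hdb hpx
    rcases h x y hxy with hr | rfl
    · exact hny (hdb y hr)
    · exact hny hpx
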